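/- Triangle-type inequality for the alpha-divergence moment functional: for probability measures P ≪ Q and an intermediate probability measure R with λ ≪ P ≪ Q ≪ R ≪ λ, defining I_α(A‖B) = ∫ (dA/dB)^α dB, one has I_α(P‖Q) ≤ I_{2α}(P‖R)^{1/2} · I_{2α−1}(R‖Q)^{1/2} for all α > 1. -/

import Mathlib

open MeasureTheory
open scoped ENNReal

/-- Triangle-type inequality for the alpha-divergence moment functional
`I_α(A‖B) = ∫ (dA/dB)^α dB`: for probability measures with `λ ≪ P ≪ Q ≪ R ≪ λ`
(`λ` the Lebesgue measure on the ambient space) and `α > 1`,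
`I_α(P‖Q) ≤ I_{2α}(P‖R)^{1/2} · I_{2α−1}(R‖Q)^{1/2}`. -/
theorem alpha_moment_triangle
    {X : Type*} [MeasureSpace X] (P Q R : Measure X)
    [IsProbabilityMeasure P] [IsProbabilityMeasure Q] [IsProbabilityMeasure R]
    (hlamP : (volume : Measure X) ≪ P) (hPQ : P ≪ Q) (hQR : Q ≪ R)
    (hRlam : R ≪ (volume : Measure X))
    (α : ℝ) (hα : 1 < α) :
    ∫⁻ x, (P.rnDeriv Q x) ^ α ∂Q
      ≤ (∫⁻ x, (P.rnDeriv R x) ^ (2 * α) ∂ R) ^ ((1 : ℝ) / 2)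
        * (∫⁻ x, (R.rnDeriv Q x) ^ (2 * α - 1) ∂Q) ^ ((1 : ℝ) / 2) := by
  have hRQ : R ≪ Q := hRlam.trans (hlamP.trans hPQ)
  have hPR : P ≪ R := hPQ.trans hQR
  set a : X → ℝ≥0∞ := P.rnDeriv R with ha
  set b : X → ℝ≥0∞ := R.rnDeriv Q with hb
  have hameas : Measurable a := Measure.measurable_rnDeriv _ _
  have hbmeas : Measurable b := Measure.measurable_rnDeriv _ _
  set f : X → ℝ≥0∞ := fun x => a x ^ α * b x ^ ((1:ℝ)/2) with hf
  set g : X → ℝ≥0∞ := fun x => b x ^ (α - 1/2) with hg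
  have hfmeas : AEMeasurable f Q := ((hameas.pow_const _).mul (hbmeas.pow_const _)).aemeasurable
  have hgmeas : AEMeasurable g Q := (hbmeas.pow_const _).aemeasurable
  -- Step 1: LHS = ∫ f * g
  have hchain : a * b =ᵐ[Q] P.rnDeriv Q := Measure.rnDeriv_mul_rnDeriv hPR
  have h1 : ∫⁻ x, (P.rnDeriv Q x) ^ α ∂Q = ∫⁻ x, (f * g) x ∂Q := by
    refine lintegral_congr_ae ?_
    filter_upwards [hchain] with x hx
    have : P.rnDeriv Q x = a x * b x := hx.symm
    rw [this, ENNReal.mul_rpow_of_nonneg _ _ (by linarith : (0:ℝ) ≤ α)]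
    simp only [Pi.mul_apply, hf, hg]
    rw [mul_assoc, ← ENNReal.rpow_add_of_nonneg _ _ (by norm_num) (by linarith)]
    norm_num
  rw [h1]
  -- Step 2: Cauchy-Schwarz
  have hconj : Real.HolderConjugate 2 2 := ⟨by norm_num, by norm_num, by norm_num⟩
  refine le_trans (ENNReal.lintegral_mul_le_Lp_mul_Lq Q hconj hfmeas hgmeas) ?_
  -- Step 3: identify the two factors
  have hf2 : ∫⁻ x, f x ^ (2:ℝ) ∂Q = ∫⁻ x, a x ^ (2 * α) ∂ R := by
    have : ∀ x, f x ^ (2:ℝ) = b x * a x ^ (2 * α) := by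
      intro x
      rw [hf]
      rw [ENNReal.mul_rpow_of_nonneg _ _ (by norm_num : (0:ℝ) ≤ 2),
        ← ENNReal.rpow_mul, ← ENNReal.rpow_mul]
      norm_num
      rw [mul_comm, mul_comm α 2]
    simp_rw [this]
    exact lintegral_rnDeriv_mul hRQ ((hameas.pow_const _).aemeasurable)
  have hg2 : ∫⁻ x, g x ^ (2:ℝ) ∂Q = ∫⁻ x, b x ^ (2 * α - 1) ∂Q := by
    refine lintegral_congr fun x => ?_
    rw [hg, ← ENNReal.rpow_mul]
    ring_nf
  rw [hf2, hg2]
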